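/- Let G be a group, C a finite normal subgroup of G, and φ : G → G/C the canonical surjection. For any g ∈ G, the image φ(C_G(g)) is a subgroup of the centralizer C_{G/C}(gC) of index at most |C|. -/

import Mathlib

theorem stmt_2 (G : Type*) [Group G] (C : Subgroup G) [C.Normal] [Finite C] (g : G) :
    (Subgroup.centralizer {g}).map (QuotientGroup.mk' C) ≤
        Subgroup.centralizer {((g : G ⧸ C))} ∧
      ((Subgroup.centralizer {g}).map (QuotientGroup.mk' C)).relIndex
          (Subgroup.centralizer {((g : G ⧸ C))}) ≤ Nat.card C := by
  set φ := QuotientGroup.mk' C with hφdef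
  have hφ : Function.Surjective φ := QuotientGroup.mk'_surjective C
  set D : Subgroup (G ⧸ C) := Subgroup.centralizer {((g : G ⧸ C))} with hD
  set H' : Subgroup G := D.comap φ with hH'
  -- part 1
  have h1 : (Subgroup.centralizer {g}).map φ ≤ D := by
    rintro _ ⟨x, hx, rfl⟩
    simp only [SetLike.mem_coe, Subgroup.mem_centralizer_singleton_iff] at hx
    rw [hD, Subgroup.mem_centralizer_singleton_iff]
    show φ x * φ g = φ g * φ x
    rw [← map_mul, ← map_mul, hx]
  -- injection from quotient into C
  set S : Subgroup H' := (Subgroup.centralizer {g}).subgroupOf H' with hS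
  have Fmem : ∀ x : H', (x : G) * g * (x : G)⁻¹ * g⁻¹ ∈ C := by
    intro x
    have hx : φ (x : G) ∈ D := x.2
    rw [hD, Subgroup.mem_centralizer_singleton_iff] at hx
    have h2 : φ ((x : G) * g * (x : G)⁻¹ * g⁻¹) = 1 := by
      have : φ (x : G) * φ g = φ g * φ (x : G) := hx
      simp only [map_mul, map_inv]
      rw [this]; group
    rwa [← QuotientGroup.ker_mk' C, MonoidHom.mem_ker]
  set F : H' → C := fun x => ⟨(x : G) * g * (x : G)⁻¹ * g⁻¹, Fmem x⟩ with hF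
  have key : ∀ x y : H', (F x = F y) ↔ x⁻¹ * y ∈ S := by
    intro x y
    have hmem : x⁻¹ * y ∈ S ↔ ((x : G)⁻¹ * (y : G)) * g = g * ((x : G)⁻¹ * (y : G)) := by
      rw [hS, Subgroup.mem_subgroupOf, Subgroup.mem_centralizer_singleton_iff]
      rfl
    rw [hmem]
    constructor
    · intro h
      have h' : (x : G) * g * (x : G)⁻¹ = (y : G) * g * (y : G)⁻¹ :=
        mul_right_cancel (congrArg Subtype.val h)
      have := congrArg (fun z => (x : G)⁻¹ * z * (y : G)) h'
      simp only [mul_assoc] at this ⊢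
      simpa [mul_assoc] using this.symm
    · intro h
      apply Subtype.ext
      show (x : G) * g * (x : G)⁻¹ * g⁻¹ = (y : G) * g * (y : G)⁻¹ * g⁻¹
      have h' : (x : G) * g * (x : G)⁻¹ = (y : G) * g * (y : G)⁻¹ := by
        have := congrArg (fun z => (x : G) * z * (y : G)⁻¹) h
        simp only [mul_assoc] at this ⊢
        simpa using this.symm
      rw [h']
  have hfq : ∀ (a b : H'), (QuotientGroup.leftRel S) a b → F a = F b := by
    intro a b hab
    rw [QuotientGroup.leftRel_apply] at hab
    exact (key a b).mpr hab
  set f : (H' ⧸ S) → C := fun q => Quotient.liftOn' q F hfq with hf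
  have hinj : Function.Injective f := by
    intro q₁ q₂
    refine Quotient.inductionOn₂' q₁ q₂ ?_
    intro a b h
    exact Quotient.sound' (QuotientGroup.leftRel_apply.mpr ((key a b).mp h))
  have hfin : Finite (H' ⧸ S) := Finite.of_injective f hinj
  have hcard : Nat.card (H' ⧸ S) ≤ Nat.card C := Nat.card_le_card_of_injective f hinj
  have hrel : (Subgroup.centralizer {g}).relIndex H' = Nat.card (H' ⧸ S) := rfl
  have hpos : 0 < (Subgroup.centralizer {g}).relIndex H' := by
    rw [hrel]
    exact Nat.card_pos
  -- transfer to quotient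
  have hcm : Subgroup.comap φ ((Subgroup.centralizer {g}).map φ) =
      Subgroup.centralizer {g} ⊔ C := by
    rw [Subgroup.comap_map_eq, hφdef, QuotientGroup.ker_mk']
  have hmc : Subgroup.map φ H' = D := Subgroup.map_comap_eq_self_of_surjective hφ D
  have e1 : ((Subgroup.centralizer {g}).map φ).relIndex D =
      (Subgroup.centralizer {g} ⊔ C).relIndex H' := by
    rw [← hmc, ← Subgroup.relIndex_comap, hcm]
  have hdvd : (Subgroup.centralizer {g} ⊔ C).relIndex H' ∣
      (Subgroup.centralizer {g}).relIndex H' :=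
    Subgroup.relIndex_dvd_of_le_left H' le_sup_left
  refine ⟨h1, ?_⟩
  rw [e1]
  exact le_trans (Nat.le_of_dvd hpos hdvd) (hrel ▸ hcard)
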